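/- Let S be the standard unilateral shift on ℓ²(ℕ), i.e. the weighted unilateral shift with all weights equal to 1 (S e_k = e_{k+1} for all k). Then for every k ∈ ℕ, ⟨e_0, (S + S*)^{2k} e_0⟩ = C_k, the k-th Catalan number. -/

import Mathlib

open MeasureTheory
open scoped InnerProductSpace ComplexOrder

noncomputable abbrev ell2 : Type := lp (fun _ : ℕ => ℂ) 2

/-- The canonical orthonormal basis vectors of `ℓ²(ℕ)`. -/
noncomputable def e (k : ℕ) : ell2 := lp.single 2 k 1


def f : ℕ → ℕ → ℕ
  | 0, 0 => 1
  | 0, _+1 => 0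
  | n+1, 0 => f n 1
  | n+1, j+1 => f n j + f n (j+2)

def F (n j : ℕ) : ℕ :=
  if j ≤ n ∧ (n + j) % 2 = 0 then n.choose ((n+j)/2) - n.choose ((n+j)/2 + 1) else 0

lemma choose_anti {n r : ℕ} (h : n ≤ 2 * r) : n.choose (r+1) ≤ n.choose r := by
  rcases le_or_gt r n with hr | hr
  · have h1 := Nat.choose_succ_right_eq n r
    have h2 : n - r ≤ r + 1 := by omega
    nlinarith [Nat.choose_pos hr, Nat.mul_le_mul_left (n.choose r) h2]
  · rw [Nat.choose_eq_zero_of_lt (by omega)]; exact Nat.zero_le _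

lemma F_succ_zero (n : ℕ) : F (n+1) 0 = F n 1 := by
  rcases Nat.even_or_odd n with he | ho
  · obtain ⟨t, rfl⟩ := he
    have h1 : ¬ ((0 ≤ t+t+1) ∧ (t+t+1+0) % 2 = 0) := by omega
    have h2 : ¬ ((1 ≤ t+t) ∧ (t+t+1) % 2 = 0) := by omega
    rw [F, F, if_neg h1, if_neg h2]
  · obtain ⟨t, rfl⟩ := ho
    have h1 : (0 ≤ 2*t+1+1) ∧ (2*t+1+1+0) % 2 = 0 := by omega
    have h2 : (1 ≤ 2*t+1) ∧ (2*t+1+1) % 2 = 0 := by omega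
    rw [F, F, if_pos h1, if_pos h2]
    have e1 : (2*t+1+1+0)/2 = t+1 := by omega
    have e2 : (2*t+1+1)/2 = t+1 := by omega
    simp only [e1, e2]
    have p1 : Nat.choose (2*t+1+1) (t+1) = Nat.choose (2*t+1) t + Nat.choose (2*t+1) (t+1) :=
      Nat.choose_succ_succ _ _
    have p2 : Nat.choose (2*t+1+1) (t+1+1) = Nat.choose (2*t+1) (t+1) + Nat.choose (2*t+1) (t+1+1) :=
      Nat.choose_succ_succ _ _
    have hsym : Nat.choose (2*t+1) t = Nat.choose (2*t+1) (t+1) := by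
      have := Nat.choose_symm (show t+1 ≤ 2*t+1 by omega)
      have e : 2*t+1 - (t+1) = t := by omega
      rw [e] at this
      omega
    have hle : Nat.choose (2*t+1) (t+1+1) ≤ Nat.choose (2*t+1) (t+1) := choose_anti (by omega)
    have hle' : Nat.choose (2*t+1+1) (t+1+1) ≤ Nat.choose (2*t+1+1) (t+1) := choose_anti (by omega)
    zify [hle, hle']
    omega

lemma F_succ_succ (n j : ℕ) : F (n+1) (j+1) = F n j + F n (j+2) := by
  rcases Nat.lt_or_ge n j with hj | hj
  · have : ¬ ((j+1 ≤ n+1) ∧ (n+1+(j+1)) % 2 = 0) := by omega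
    have h2 : ¬ ((j ≤ n) ∧ (n+j) % 2 = 0) := by omega
    have h3 : ¬ ((j+2 ≤ n) ∧ (n+(j+2)) % 2 = 0) := by omega
    rw [F, F, F, if_neg this, if_neg h2, if_neg h3]
  rcases Nat.even_or_odd (n + j) with he | ho
  swap
  · have h1 : ¬ ((j+1 ≤ n+1) ∧ (n+1+(j+1)) % 2 = 0) := by
      obtain ⟨t, ht⟩ := ho; omega
    have h2 : ¬ ((j ≤ n) ∧ (n+j) % 2 = 0) := by
      obtain ⟨t, ht⟩ := ho; omega
    have h3 : ¬ ((j+2 ≤ n) ∧ (n+(j+2)) % 2 = 0) := by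
      obtain ⟨t, ht⟩ := ho; omega
    rw [F, F, F, if_neg h1, if_neg h2, if_neg h3]
  · obtain ⟨m, hm⟩ : ∃ m, n + j = 2 * m := by
      obtain ⟨t, ht⟩ := he; exact ⟨t, by omega⟩
    have h1 : (j+1 ≤ n+1) ∧ (n+1+(j+1)) % 2 = 0 := by omega
    have h2 : (j ≤ n) ∧ (n+j) % 2 = 0 := by omega
    rw [F, F, if_pos h1, if_pos h2]
    have e1 : (n+1+(j+1))/2 = m+1 := by omega
    have e2 : (n+j)/2 = m := by omega
    rw [e1, e2]
    have p1 : Nat.choose (n+1) (m+1) = Nat.choose n m + Nat.choose n (m+1) :=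
      Nat.choose_succ_succ n m
    have p2 : Nat.choose (n+1) (m+1+1) = Nat.choose n (m+1) + Nat.choose n (m+1+1) :=
      Nat.choose_succ_succ n (m+1)
    have hle1 : Nat.choose n (m+1) ≤ Nat.choose n m := choose_anti (by omega)
    have hle2 : Nat.choose n (m+1+1) ≤ Nat.choose n (m+1) := choose_anti (by omega)
    have hle0 : Nat.choose (n+1) (m+1+1) ≤ Nat.choose (n+1) (m+1) := choose_anti (by omega)
    rcases Nat.lt_or_ge n (j+2) with h | h
    · have hz1 : Nat.choose n (m+1) = 0 := Nat.choose_eq_zero_of_lt (by omega)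
      have hz2 : Nat.choose n (m+1+1) = 0 := Nat.choose_eq_zero_of_lt (by omega)
      have hz3 : F n (j+2) = 0 := by
        rw [F, if_neg (by omega)]
      rw [hz3]
      zify [hle0, hle1]
      omega
    · have h3 : (j+2 ≤ n) ∧ (n+(j+2)) % 2 = 0 := by omega
      rw [F, if_pos h3]
      have e3 : (n+(j+2))/2 = m+1 := by omega
      rw [e3]
      zify [hle0, hle1, hle2]
      omega

lemma f_eq_F : ∀ n j, f n j = F n j := by
  intro n
  induction n with
  | zero =>
    intro j
    cases j with
    | zero => simp [f, F]
    | succ j => simp [f, F]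
  | succ n ih =>
    intro j
    cases j with
    | zero => rw [f, F_succ_zero, ih]
    | succ j => rw [f, F_succ_succ, ih, ih]

lemma f_catalan (k : ℕ) : f (2*k) 0 = catalan k := by
  rw [f_eq_F]
  have h1 : (0 ≤ 2*k) ∧ (2*k+0) % 2 = 0 := by omega
  rw [F, if_pos h1]
  have e1 : (2*k+0)/2 = k := by omega
  rw [e1]
  have hcb : (k+1) * catalan k = Nat.choose (2*k) k := by
    rw [succ_mul_catalan_eq_centralBinom, Nat.centralBinom]
  have h2 : Nat.choose (2*k) (k+1) * (k+1) = Nat.choose (2*k) k * k := by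
    have := Nat.choose_succ_right_eq (2*k) k
    have e : 2*k - k = k := by omega
    rw [e] at this; exact this
  have h3 : Nat.choose (2*k) (k+1) = k * catalan k := by
    have : Nat.choose (2*k) (k+1) * (k+1) = (k * catalan k) * (k+1) := by
      rw [h2, ← hcb]; ring
    exact Nat.eq_of_mul_eq_mul_right (by omega) this
  have hcb' : Nat.choose (2*k) k = k * catalan k + catalan k := by
    rw [← hcb]; ring
  omega
lemma e_coord (i : ℕ) (x : ell2) : ⟪e i, x⟫_ℂ = x i := by
  rw [e, lp.inner_single_left]
  simp [RCLike.inner_apply]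

lemma e_apply (j m : ℕ) : (e j) m = if m = j then 1 else 0 := by
  rw [e, lp.single_apply]
  split_ifs with h
  · subst h; simp
  · simp [h]

lemma adj_zero (S : ell2 →L[ℂ] ell2) (hS : ∀ k : ℕ, S (e k) = e (k + 1)) :
    ContinuousLinearMap.adjoint S (e 0) = 0 := by
  apply lp.ext
  funext m
  have : (ContinuousLinearMap.adjoint S (e 0)) m = ⟪e m, ContinuousLinearMap.adjoint S (e 0)⟫_ℂ :=
    (e_coord _ _).symm
  rw [this, ContinuousLinearMap.adjoint_inner_right, hS, e_coord, e_apply]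
  simp

lemma adj_succ (S : ell2 →L[ℂ] ell2) (hS : ∀ k : ℕ, S (e k) = e (k + 1)) (j : ℕ) :
    ContinuousLinearMap.adjoint S (e (j+1)) = e j := by
  apply lp.ext
  funext m
  have : (ContinuousLinearMap.adjoint S (e (j+1))) m
      = ⟪e m, ContinuousLinearMap.adjoint S (e (j+1))⟫_ℂ := (e_coord _ _).symm
  rw [this, ContinuousLinearMap.adjoint_inner_right, hS, e_coord, e_apply, e_apply]
  simp


lemma coords (S : ell2 →L[ℂ] ell2) (hS : ∀ k : ℕ, S (e k) = e (k + 1)) :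
    ∀ n i, (((S + ContinuousLinearMap.adjoint S) ^ n) (e 0)) i = (f n i : ℂ) := by
  intro n
  induction n with
  | zero =>
    intro i
    rw [pow_zero, ContinuousLinearMap.one_apply, e_apply]
    cases i with
    | zero => simp [f]
    | succ i => simp [f]
  | succ n ih =>
    intro i
    rw [pow_succ', ContinuousLinearMap.mul_apply]
    set y := ((S + ContinuousLinearMap.adjoint S) ^ n) (e 0) with hy
    rw [ContinuousLinearMap.add_apply]
    have hadd : ((S y + ContinuousLinearMap.adjoint S y : ell2)) i
        = (S y) i + (ContinuousLinearMap.adjoint S y) i := rfl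
    rw [hadd]
    have hA : (ContinuousLinearMap.adjoint S y) i = y (i+1) := by
      rw [← e_coord, ContinuousLinearMap.adjoint_inner_right, hS, e_coord]
    have hSy : (S y) i = ⟪ContinuousLinearMap.adjoint S (e i), y⟫_ℂ := by
      rw [ContinuousLinearMap.adjoint_inner_left, e_coord]
    cases i with
    | zero =>
      rw [hSy, adj_zero S hS, hA, ih, f]
      simp
    | succ j =>
      rw [hSy, adj_succ S hS, e_coord, hA, ih, ih, f]
      push_cast
      ring

/-- The even moments of the real part of the standard unilateral shift are the Catalan
numbers. -/
theorem shift_moments_catalan (S : ell2 →L[ℂ] ell2)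
    (hS : ∀ k : ℕ, S (e k) = e (k + 1)) (k : ℕ) :
    ⟪e 0, ((S + ContinuousLinearMap.adjoint S) ^ (2 * k)) (e 0)⟫_ℂ = (catalan k : ℂ) := by
  rw [e_coord, coords S hS (2*k) 0, f_catalan]
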